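/- Entropy–dissipation balance (De Giorgi formulation of equilibrium flow): let x: [0,T] → ℝ_{>0}^V solve ẋ = −S ∇Ψ*_x(Sᵀ(∇Φ(x) − ∇Φ(x̃))), with f(x) := Sᵀ(∇Φ(x) − ∇Φ(x̃)) and j(x) := ∇Ψ*_x(f(x)), and suppose t ↦ Ψ*_{x(t)}(f(x(t))) + Ψ_{x(t)}(j(x(t))) is continuous. Then for all t ∈ [0,T], D[x(0)‖x̃] − D[x(t)‖x̃] = ∫₀ᵗ (Ψ*_{x(t')}(f(x(t'))) + Ψ_{x(t')}(j(x(t')))) dt'. -/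

import Mathlib

open Matrix Filter Set

noncomputable def grad {n : ℕ} (F : (Fin n → ℝ) → ℝ) (x : Fin n → ℝ) : Fin n → ℝ :=
  fun i => fderiv ℝ F x (Pi.single i 1)

def IsDissipation {n : ℕ} (Ψ : (Fin n → ℝ) → ℝ) : Prop :=
  StrictConvexOn ℝ Set.univ Ψ ∧ ContDiff ℝ 1 Ψ ∧
  Tendsto (fun f => Ψ f / ‖f‖) (Bornology.cobounded (Fin n → ℝ)) atTop ∧
  (∀ f, Ψ (-f) = Ψ f) ∧ Ψ 0 = 0

noncomputable def legendre {n : ℕ} (Ψ : (Fin n → ℝ) → ℝ) (j : Fin n → ℝ) : ℝ :=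
  ⨆ f : Fin n → ℝ, (j ⬝ᵥ f - Ψ f)

noncomputable def breg {n : ℕ} (F : (Fin n → ℝ) → ℝ) (x x' : Fin n → ℝ) : ℝ :=
  F x - F x' - (x - x') ⬝ᵥ grad F x'

def posOrth (n : ℕ) : Set (Fin n → ℝ) := {x | ∀ i, 0 < x i}

def IsThermo {n : ℕ} (Φ : (Fin n → ℝ) → ℝ) : Prop :=
  StrictConvexOn ℝ (posOrth n) Φ ∧
  (∀ x ∈ posOrth n, DifferentiableAt ℝ Φ x) ∧
  Set.BijOn (grad Φ) (posOrth n) Set.univ ∧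
  (∀ xin ∈ posOrth n, ∀ xbd ∈ frontier {x : Fin n → ℝ | ∀ i, 0 ≤ x i},
    Tendsto (fun lam : ℝ => deriv (fun l : ℝ => Φ (l • xin + (1 - l) • xbd)) lam)
      (nhdsWithin 0 (Set.Ioi 0)) atBot)

lemma grad_dot {n : ℕ} (F : (Fin n → ℝ) → ℝ) (x v : Fin n → ℝ) :
    grad F x ⬝ᵥ v = fderiv ℝ F x v := by
  have hv : v = ∑ i, v i • (Pi.single i 1 : Fin n → ℝ) := by
    funext j
    simp [Finset.sum_apply, Pi.single_apply]
  conv_rhs => rw [hv]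
  rw [map_sum]
  simp [grad, dotProduct, mul_comm]

lemma conv_grad_ineq {n : ℕ} {Ψ : (Fin n → ℝ) → ℝ} (hc : ConvexOn ℝ Set.univ Ψ)
    (hd : ∀ y, DifferentiableAt ℝ Ψ y) (f g : Fin n → ℝ) :
    Ψ f + fderiv ℝ Ψ f (g - f) ≤ Ψ g := by
  set h : ℝ → ℝ := fun t => Ψ (f + t • (g - f)) with hh
  have hconv : ConvexOn ℝ Set.univ h := by
    have := hc.comp_affineMap (AffineMap.lineMap f g : ℝ →ᵃ[ℝ] (Fin n → ℝ))
    have heq : (fun x : ℝ => Ψ ((1 - x) • f + x • g)) = h := by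
      funext t
      simp only [h]
      congr 1
      module
    simpa [AffineMap.lineMap_apply_module, Function.comp_def, heq] using this
  have hder : HasDerivAt h (fderiv ℝ Ψ f (g - f)) 0 := by
    have hl : HasDerivAt (fun t : ℝ => f + t • (g - f)) (g - f) 0 := by
      simpa using ((hasDerivAt_id (0:ℝ)).smul_const (g - f)).const_add f
    have hfd : HasFDerivAt Ψ (fderiv ℝ Ψ f) (f + (0:ℝ) • (g - f)) := by
      simpa using (hd f).hasFDerivAt
    exact hfd.comp_hasDerivAt 0 hl
  have := hconv.le_slope_of_hasDerivAt (Set.mem_univ 0) (Set.mem_univ 1)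
    one_pos hder
  rw [slope_def_field] at this
  simp only [h, one_smul, zero_smul, add_zero] at this
  have h1 : f + (g - f) = g := by abel
  rw [h1] at this
  have : fderiv ℝ Ψ f (g - f) ≤ Ψ g - Ψ f := by
    simpa [div_one] using this
  linarith

lemma legendre_grad {n : ℕ} {Ψ : (Fin n → ℝ) → ℝ} (h : IsDissipation Ψ)
    (f : Fin n → ℝ) :
    legendre Ψ (grad Ψ f) = grad Ψ f ⬝ᵥ f - Ψ f := by
  obtain ⟨hsc, hC1, -, -, -⟩ := h
  have hd : ∀ y, DifferentiableAt ℝ Ψ y := fun y =>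
    (hC1.differentiable one_ne_zero).differentiableAt
  have key : ∀ g, grad Ψ f ⬝ᵥ g - Ψ g ≤ grad Ψ f ⬝ᵥ f - Ψ f := by
    intro g
    have h1 := conv_grad_ineq hsc.convexOn hd f g
    rw [← grad_dot] at h1
    have h2 : grad Ψ f ⬝ᵥ (g - f) = grad Ψ f ⬝ᵥ g - grad Ψ f ⬝ᵥ f := by
      simp [dotProduct_sub]
    linarith
  have hbdd : BddAbove (Set.range fun g => grad Ψ f ⬝ᵥ g - Ψ g) :=
    ⟨grad Ψ f ⬝ᵥ f - Ψ f, by rintro _ ⟨g, rfl⟩; exact key g⟩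
  exact le_antisymm (ciSup_le key) (le_ciSup hbdd f)

/-- Entropy–dissipation balance (integral De Giorgi formulation):
D[x(0)‖x̃] − D[x(t)‖x̃] = ∫₀ᵗ (Ψ*(f) + Ψ(j)) dt' along the equilibrium flow. -/
theorem entropy_dissipation_balance {V E : ℕ}
    (S : Matrix (Fin V) (Fin E) ℝ)
    (Φ : (Fin V → ℝ) → ℝ) (hΦ : IsThermo Φ)
    (Ψstar : (Fin V → ℝ) → (Fin E → ℝ) → ℝ)
    (hdiss : ∀ x ∈ posOrth V, IsDissipation (Ψstar x))
    (xtil : Fin V → ℝ) (hxtil : xtil ∈ posOrth V)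
    (T : ℝ) (x : ℝ → Fin V → ℝ)
    (hpos : ∀ t ∈ Set.Icc (0:ℝ) T, x t ∈ posOrth V)
    (hflow : ∀ t ∈ Set.Icc (0:ℝ) T,
      HasDerivAt x
        (-(S *ᵥ grad (Ψstar (x t)) (Sᵀ *ᵥ (grad Φ (x t) - grad Φ xtil)))) t)
    (hcont : ContinuousOn
      (fun t => Ψstar (x t) (Sᵀ *ᵥ (grad Φ (x t) - grad Φ xtil))
        + legendre (Ψstar (x t))
            (grad (Ψstar (x t)) (Sᵀ *ᵥ (grad Φ (x t) - grad Φ xtil))))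
      (Set.Icc (0:ℝ) T)) :
    ∀ t ∈ Set.Icc (0:ℝ) T,
      breg Φ (x 0) xtil - breg Φ (x t) xtil =
        ∫ t' in (0:ℝ)..t,
          (Ψstar (x t') (Sᵀ *ᵥ (grad Φ (x t') - grad Φ xtil))
            + legendre (Ψstar (x t'))
                (grad (Ψstar (x t')) (Sᵀ *ᵥ (grad Φ (x t') - grad Φ xtil)))) := by
  intro t ht
  obtain ⟨ht0, htT⟩ := ht
  set c := grad Φ xtil with hc
  set I : ℝ → ℝ := fun s => Ψstar (x s) (Sᵀ *ᵥ (grad Φ (x s) - c))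
      + legendre (Ψstar (x s)) (grad (Ψstar (x s)) (Sᵀ *ᵥ (grad Φ (x s) - c))) with hI
  set g : ℝ → ℝ := fun s => breg Φ (x s) xtil with hg
  have huIcc : Set.uIcc (0:ℝ) t ⊆ Set.Icc (0:ℝ) T := by
    rw [Set.uIcc_of_le ht0]
    exact Set.Icc_subset_Icc le_rfl htT
  have hderiv : ∀ s ∈ Set.uIcc (0:ℝ) t, HasDerivAt g (-(I s)) s := by
    intro s hs
    have hsIcc : s ∈ Set.Icc (0:ℝ) T := huIcc hs
    set f := Sᵀ *ᵥ (grad Φ (x s) - c) with hf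
    set j := grad (Ψstar (x s)) f with hj
    set v : Fin V → ℝ := -(S *ᵥ j) with hv
    have hx' : HasDerivAt x v s := hflow s hsIcc
    -- derivative of Φ ∘ x
    have h1 : HasDerivAt (fun u => Φ (x u)) (grad Φ (x s) ⬝ᵥ v) s := by
      rw [grad_dot]
      exact (hΦ.2.1 _ (hpos s hsIcc)).hasFDerivAt.comp_hasDerivAt s hx'
    -- derivative of (x u - xtil) ⬝ᵥ c
    have h2 : HasDerivAt (fun u => (x u - xtil) ⬝ᵥ c) (v ⬝ᵥ c) s := by
      have : ∀ i : Fin V, HasDerivAt (fun u => (x u i - xtil i) * c i) (v i * c i) s :=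
        fun i => (((hasDerivAt_pi.mp hx') i).sub_const (xtil i)).mul_const (c i)
      simpa [dotProduct, Pi.sub_apply] using HasDerivAt.fun_sum (fun i _ => this i)
    have h3 : HasDerivAt g (grad Φ (x s) ⬝ᵥ v - v ⬝ᵥ c) s := by
      exact (h1.sub_const (Φ xtil)).sub h2
    have h4 : grad Φ (x s) ⬝ᵥ v - v ⬝ᵥ c = -(j ⬝ᵥ f) := by
      have e1 : j ⬝ᵥ f = (S *ᵥ j) ⬝ᵥ (grad Φ (x s) - c) := by
        rw [hf, Matrix.dotProduct_mulVec j Sᵀ, Matrix.vecMul_transpose, dotProduct_comm]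
      rw [e1, hv]
      simp only [dotProduct_sub, dotProduct_neg, neg_dotProduct]
      rw [dotProduct_comm (grad Φ (x s)) (S *ᵥ j)]
      ring
    have h5 : I s = j ⬝ᵥ f := by
      show Ψstar (x s) f + legendre (Ψstar (x s)) (grad (Ψstar (x s)) f) = j ⬝ᵥ f
      rw [legendre_grad (hdiss _ (hpos s hsIcc)) f]
      ring
    rw [h5, ← h4]
    exact h3
  have hint : IntervalIntegrable (fun s => -(I s)) MeasureTheory.volume 0 t :=
    ((hcont.mono huIcc).neg).intervalIntegrable
  have := intervalIntegral.integral_eq_sub_of_hasDerivAt hderiv hint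
  have hneg : ∫ s in (0:ℝ)..t, -(I s) = -∫ s in (0:ℝ)..t, I s :=
    intervalIntegral.integral_neg
  rw [hneg] at this
  have : ∫ s in (0:ℝ)..t, I s = g 0 - g t := by linarith
  rw [hI] at this
  simp only [hg] at this
  linarith [this]
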